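/- Let A be a C*-algebra, K a closed essential ideal, S a closed semiregular operator on A with S|_K regular with z-transform z. If z ∈ M(A) (i.e., z and z* multiply A into A), then S** is regular: z is the z-transform of a regular operator T on A and S** = T. -/

import Mathlib

/-- A densely defined operator on a C*-subalgebra `A` of an ambient unital C*-algebra `M`
(playing the role of `M(K)`).  It is presented by a total function `toFun` whose
meaningful values are those on its domain `dom ⊆ A`, which is a dense right ideal of `A`
on which the operator is `ℂ`-linear and right `A`-linear. -/
structure AmbientOp (M : Type*) [CStarAlgebra M] (A : Set M) where
  dom : Set M
  toFun : M → M
  dom_sub : dom ⊆ A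
  maps_to : ∀ a ∈ dom, toFun a ∈ A
  dense_dom : ∀ a ∈ A, a ∈ closure dom
  zero_mem : (0 : M) ∈ dom
  add_mem : ∀ a ∈ dom, ∀ b ∈ dom, a + b ∈ dom
  smul_mem : ∀ (c : ℂ), ∀ a ∈ dom, c • a ∈ dom
  mul_mem : ∀ a ∈ dom, ∀ x ∈ A, a * x ∈ dom
  map_add' : ∀ a ∈ dom, ∀ b ∈ dom, toFun (a + b) = toFun a + toFun b
  map_smul' : ∀ (c : ℂ), ∀ a ∈ dom, toFun (c • a) = c • toFun a
  map_mul' : ∀ a ∈ dom, ∀ x ∈ A, toFun (a * x) = toFun a * x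

namespace AmbientOp

variable {M : Type*} [CStarAlgebra M] {A : Set M}

/-- The domain of the adjoint `S*`, relative to the algebra `A`. -/
def adjDom (S : AmbientOp M A) : Set M :=
  {a : M | a ∈ A ∧ ∃ c ∈ A, ∀ b ∈ S.dom, star a * S.toFun b = star c * b}

/-- `S` is semiregular if its adjoint is densely defined in `A`. -/
def Semiregular (S : AmbientOp M A) : Prop := ∀ a ∈ A, a ∈ closure S.adjDom

/-- `S` is a closed operator if its graph is closed. -/
def IsClosedOp (S : AmbientOp M A) : Prop :=
  IsClosed {p : M × M | p.1 ∈ S.dom ∧ p.2 = S.toFun p.1}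

open Classical in
/-- The value of the adjoint `S*` at `a` (junk value `0` off the adjoint domain). -/
noncomputable def adjFun (S : AmbientOp M A) (a : M) : M :=
  if h : ∃ c ∈ A, ∀ b ∈ S.dom, star a * S.toFun b = star c * b then h.choose else 0

/-- The domain of the double adjoint `S**`, relative to `A`. -/
def adjDom2 (S : AmbientOp M A) : Set M :=
  {a : M | a ∈ A ∧ ∃ c ∈ A, ∀ b ∈ S.adjDom, star a * S.adjFun b = star c * b}

open Classical in
/-- The value of the double adjoint `S**` at `a`. -/
noncomputable def adjFun2 (S : AmbientOp M A) (a : M) : M :=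
  if h : ∃ c ∈ A, ∀ b ∈ S.adjDom, star a * S.adjFun b = star c * b then h.choose else 0

end AmbientOp


open Polynomial in
lemma aux_cfc_approx {M : Type*} [CStarAlgebra M] (y : M) (hy : IsSelfAdjoint y)
    (f : ℝ → ℝ) (hf : Continuous f) :
    cfc f y ∈ closure (Set.range fun p : ℝ[X] => (Polynomial.aeval (R := ℝ) y) p) := by
  rcases subsingleton_or_nontrivial M with hM | hM
  · have : cfc f y = (Polynomial.aeval (R := ℝ) y) 0 := Subsingleton.elim _ _
    exact subset_closure ⟨0, this.symm⟩
  rw [Metric.mem_closure_iff]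
  intro ε hε
  set r := ‖y‖ with hr
  have hspec : spectrum ℝ y ⊆ Set.Icc (-r) r := by
    intro t ht
    have := spectrum.norm_le_norm_of_mem ht
    rw [Real.norm_eq_abs] at this
    exact abs_le.mp this
  set g : C(Set.Icc (-r) r, ℝ) := ContinuousMap.restrict (Set.Icc (-r) r) ⟨f, hf⟩ with hg
  have hgmem : g ∈ closure ((polynomialFunctions (Set.Icc (-r) r) : Set C(Set.Icc (-r) r, ℝ))) := by
    have h1 := polynomialFunctions_closure_eq_top (-r) r
    have h2 : g ∈ (polynomialFunctions (Set.Icc (-r) r)).topologicalClosure := by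
      rw [h1]; trivial
    exact h2
  rw [Metric.mem_closure_iff] at hgmem
  obtain ⟨q, hq, hdq⟩ := hgmem (ε/2) (by positivity)
  have hq' : q ∈ (polynomialFunctions (Set.Icc (-r) r) : Set C(Set.Icc (-r) r, ℝ)) := hq
  rw [polynomialFunctions_coe] at hq'
  obtain ⟨p, hp⟩ := hq'
  refine ⟨(Polynomial.aeval (R := ℝ) y) p, ⟨p, rfl⟩, ?_⟩
  rw [dist_eq_norm, ← cfc_polynomial p y, ← cfc_sub f (fun t => p.eval t) y]
  have hle : ‖cfc (fun t => f t - p.eval t) y‖ ≤ ε/2 := by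
    refine norm_cfc_le (by positivity) fun t ht => ?_
    have htX : t ∈ Set.Icc (-r) r := hspec ht
    have h1 : f t = g ⟨t, htX⟩ := rfl
    have h2 : p.eval t = q ⟨t, htX⟩ := by rw [← hp]; rfl
    rw [Real.norm_eq_abs, ← Real.dist_eq, h1, h2]
    exact (ContinuousMap.dist_apply_le_dist _).trans hdq.le
  linarith [hle]

lemma aux_e {M : Type*} [CStarAlgebra M] [PartialOrder M] [StarOrderedRing M]
    (A : NonUnitalStarSubalgebra ℂ M) (hAc : IsClosed (A : Set M)) (x : M)
    (hx0 : 0 ≤ x) (hx1 : x ≤ 1) (hxA : ∀ a ∈ A, x * a ∈ A ∧ a * x ∈ A) :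
    (∀ a ∈ A, CFC.sqrt (1 - x) * a ∈ A ∧ a * CFC.sqrt (1 - x) ∈ A) ∧
      CFC.sqrt (1 - x) * x = x * CFC.sqrt (1 - x) := by
  set Q : Set M := {m : M | (∀ a ∈ A, m * a ∈ A ∧ a * m ∈ A) ∧ m * x = x * m} with hQ
  have hQc : IsClosed Q := by
    have h1 : IsClosed {m : M | ∀ a ∈ A, m * a ∈ A ∧ a * m ∈ A} := by
      have heq : {m : M | ∀ a ∈ A, m * a ∈ A ∧ a * m ∈ A} =
          ⋂ a ∈ (A : Set M), {m : M | m * a ∈ A ∧ a * m ∈ A} := by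
        ext m; simp [Set.mem_iInter]
      rw [heq]
      refine isClosed_biInter fun a _ => ?_
      exact IsClosed.inter (hAc.preimage (continuous_mul_right a))
        (hAc.preimage (continuous_mul_left a))
    have h2 : IsClosed {m : M | m * x = x * m} :=
      isClosed_eq (continuous_mul_right x) (continuous_mul_left x)
    exact h1.inter h2
  have hyse : IsSelfAdjoint x := .of_nonneg hx0
  have hysa : IsSelfAdjoint (1 - x) := (IsSelfAdjoint.one M).sub hyse
  have h1x : (0:M) ≤ 1 - x := sub_nonneg.mpr hx1
  -- powers of (1 - x) are in Q
  have hone : (1 : M) ∈ Q := by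
    refine ⟨fun a ha => ⟨by rwa [one_mul], by rwa [mul_one]⟩, by rw [one_mul, mul_one]⟩
  have hymem : (1 - x) ∈ Q := by
    refine ⟨fun a ha => ?_, by rw [sub_mul, mul_sub, one_mul, mul_one]⟩
    constructor
    · have := (hxA a ha).1
      simpa [sub_mul] using A.sub_mem ha this
    · have := (hxA a ha).2
      simpa [mul_sub] using A.sub_mem ha this
  have hmulQ : ∀ m ∈ Q, ∀ n ∈ Q, m * n ∈ Q := by
    rintro m ⟨hm1, hm2⟩ n ⟨hn1, hn2⟩
    refine ⟨fun a ha => ?_, by rw [mul_assoc, hn2, ← mul_assoc, hm2, mul_assoc]⟩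
    constructor
    · rw [mul_assoc]; exact (hm1 _ ((hn1 a ha).1)).1
    · rw [← mul_assoc]; exact (hn1 _ ((hm1 a ha).2)).2
  have hpow : ∀ n : ℕ, (1 - x)^n ∈ Q := by
    intro n
    induction n with
    | zero => simpa using hone
    | succ n ih => rw [pow_succ]; exact hmulQ _ ih _ hymem
  -- polynomials in (1 - x) are in Q
  have hpoly : ∀ p : Polynomial ℝ, (Polynomial.aeval (R := ℝ) (1 - x)) p ∈ Q := by
    intro p
    rw [Polynomial.aeval_eq_sum_range]
    have hsmul : ∀ (c : ℝ), ∀ m ∈ Q, c • m ∈ Q := by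
      rintro c m ⟨hm1, hm2⟩
      refine ⟨fun a ha => ?_, by rw [smul_mul_assoc, mul_smul_comm, hm2]⟩
      constructor
      · rw [smul_mul_assoc, ← algebraMap_smul ℂ c (m * a)]
        exact SMulMemClass.smul_mem _ (hm1 a ha).1
      · rw [mul_smul_comm, ← algebraMap_smul ℂ c (a * m)]
        exact SMulMemClass.smul_mem _ (hm1 a ha).2
    have hadd : ∀ m ∈ Q, ∀ n ∈ Q, m + n ∈ Q := by
      rintro m ⟨hm1, hm2⟩ n ⟨hn1, hn2⟩
      refine ⟨fun a ha => ?_, by rw [add_mul, mul_add, hm2, hn2]⟩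
      constructor
      · rw [add_mul]; exact A.add_mem (hm1 a ha).1 (hn1 a ha).1
      · rw [mul_add]; exact A.add_mem (hm1 a ha).2 (hn1 a ha).2
    have hzero : (0 : M) ∈ Q := by
      refine ⟨fun a ha => ?_, by simp⟩
      simp only [zero_mul, mul_zero]
      exact ⟨A.zero_mem, A.zero_mem⟩
    refine Finset.sum_induction _ (· ∈ Q) (fun m n hm hn => hadd m hm n hn) hzero fun i _ => hsmul _ _ (hpow i)
  -- sqrt (1 - x) as a cfc
  have hsqrt_eq : CFC.sqrt (1 - x) = cfc (fun t : ℝ => ((Real.toNNReal t).sqrt : ℝ)) (1 - x) := by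
    rw [CFC.sqrt_eq_cfc, cfc_nnreal_eq_real NNReal.sqrt (1 - x) h1x]
  have hcont : Continuous (fun t : ℝ => ((Real.toNNReal t).sqrt : ℝ)) := NNReal.continuous_coe.comp (NNReal.sqrt.continuous.comp continuous_real_toNNReal)
  have hmem : CFC.sqrt (1 - x) ∈ Q := by
    rw [hsqrt_eq]
    have := aux_cfc_approx (1 - x) hysa _ hcont
    refine hQc.closure_subset_iff.mpr ?_ this
    rintro _ ⟨p, rfl⟩
    exact hpoly p
  exact ⟨hmem.1, hmem.2⟩

/-- In the standing setup, if moreover `z ∈ M(A)` (i.e. `z` and `z*` multiply `A` into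
itself), then `S**` is regular: `z` is the z-transform of a regular operator `T` on `A`
(so `(1-z*z)^{1/2}A` is dense in `A`) and `S**` equals `T`, i.e. `S**` has domain
`(1-z*z)^{1/2}·A` and acts by `(1-z*z)^{1/2}a ↦ z a`. -/
theorem stmt_15
    {M : Type*} [CStarAlgebra M] [PartialOrder M] [StarOrderedRing M]
    (A : NonUnitalStarSubalgebra ℂ M) (hAc : IsClosed (A : Set M))
    (K : TwoSidedIdeal M) (hKc : IsClosed (K : Set M))
    (hKstar : ∀ k ∈ K, star k ∈ K)
    (hKA : (K : Set M) ⊆ (A : Set M))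
    (hKess : ∀ m : M, (∀ k ∈ K, m * k = 0) → m = 0)
    (S : AmbientOp M (A : Set M)) (hS : S.Semiregular) (hSc : S.IsClosedOp)
    (z : M) (hz : ‖z‖ ≤ 1)
    (hzdense : ∀ k ∈ K, k ∈ closure ((fun x => CFC.sqrt (1 - star z * z) * x) '' K))
    (hzdom : S.dom ∩ (K : Set M) = (fun x => CFC.sqrt (1 - star z * z) * x) '' K)
    (hzact : ∀ k ∈ K, S.toFun (CFC.sqrt (1 - star z * z) * k) = z * k)
    (hzM : ∀ a ∈ A, z * a ∈ A ∧ a * z ∈ A ∧ star z * a ∈ A ∧ a * star z ∈ A) :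
    (∀ a ∈ A, a ∈ closure ((fun x => CFC.sqrt (1 - star z * z) * x) '' A)) ∧
    S.adjDom2 = (fun x => CFC.sqrt (1 - star z * z) * x) '' A ∧
    ∀ a ∈ A, S.adjFun2 (CFC.sqrt (1 - star z * z) * a) = z * a := by
  set e := CFC.sqrt (1 - star z * z) with he_def
  -- basic facts about e
  have hx0 : (0 : M) ≤ star z * z := star_mul_self_nonneg z
  have hxnorm : ‖star z * z‖ ≤ 1 := by
    rw [CStarRing.norm_star_mul_self]
    exact mul_le_one₀ hz (norm_nonneg z) hz
  have hx1 : star z * z ≤ 1 :=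
    (CStarAlgebra.norm_le_one_iff_of_nonneg _ hx0).mp hxnorm
  have hxA : ∀ a ∈ A, (star z * z) * a ∈ A ∧ a * (star z * z) ∈ A := by
    intro a ha
    constructor
    · rw [mul_assoc]; exact (hzM _ (hzM a ha).1).2.2.1
    · rw [← mul_assoc]; exact (hzM _ (hzM a ha).2.2.2).2.1
  obtain ⟨heA, hecomm⟩ := aux_e A hAc (star z * z) hx0 hx1 hxA
  rw [← he_def] at heA hecomm
  have he0 : (0 : M) ≤ e := CFC.sqrt_nonneg _
  have hesa : IsSelfAdjoint e := .of_nonneg he0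
  have hee : e * e = 1 - star z * z := CFC.sqrt_mul_sqrt_self _ (sub_nonneg.mpr hx1)
  have hsum : e * e + star z * z = 1 := by rw [hee]; exact sub_add_cancel 1 (star z * z)
  -- essentiality on the left
  have hessL : ∀ m : M, (∀ k ∈ K, star k * m = 0) → m = 0 := by
    intro m h
    have h2 : ∀ k ∈ K, star m * k = 0 := by
      intro k hk
      have := congrArg star (h k hk)
      simpa [star_mul] using this
    have := hKess (star m) h2
    simpa using congrArg star this
  -- continuity extension
  have hext : ∀ (w : M) (D : Set M), (∀ d ∈ D, w * d = 0) → ∀ v ∈ closure D, w * v = 0 := by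
    intro w D h v hv
    have hcl : closure D ⊆ {u : M | w * u = 0} :=
      closure_minimal (fun d hd => h d hd)
        (isClosed_eq (continuous_mul_left w) continuous_const)
    exact hcl hv
  -- structure of the domain via K
  have hdomK : ∀ d ∈ S.dom, ∀ k ∈ K, ∃ k' ∈ (K : Set M),
      d * k = e * k' ∧ S.toFun d * k = z * k' := by
    intro d hd k hk
    have hdk_dom : d * k ∈ S.dom := S.mul_mem d hd k (hKA hk)
    have hdk_K : d * k ∈ (K : Set M) := K.mul_mem_left d k hk
    have hmem : d * k ∈ (fun x => e * x) '' K := by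
      rw [← hzdom]; exact ⟨hdk_dom, hdk_K⟩
    obtain ⟨k', hk', hkeq⟩ := hmem
    refine ⟨k', hk', hkeq.symm, ?_⟩
    have h1 : S.toFun (d * k) = S.toFun d * k := S.map_mul' d hd k (hKA hk)
    rw [← h1, ← hkeq]
    exact hzact k' hk'
  -- every element of the domain is of the required form
  have hstruct : ∀ d ∈ S.dom, d = e * (e * d + star z * S.toFun d) ∧
      S.toFun d = z * (e * d + star z * S.toFun d) := by
    intro d hd
    have key1 : ∀ u : M, e * (e * (e * u) + star z * (z * u)) = e * u := by
      intro u
      calc e * (e * (e * u) + star z * (z * u))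
          = e * ((e * e + star z * z) * u) := by noncomm_ring
        _ = e * u := by rw [hsum, one_mul]
    have key2 : ∀ u : M, z * (e * (e * u) + star z * (z * u)) = z * u := by
      intro u
      calc z * (e * (e * u) + star z * (z * u))
          = z * ((e * e + star z * z) * u) := by noncomm_ring
        _ = z * u := by rw [hsum, one_mul]
    have hck : ∀ k ∈ K, (e * d + star z * S.toFun d) * k =
        e * (d * k) + star z * (S.toFun d * k) := by
      intro k hk; noncomm_ring
    constructor
    · have hz0 : ∀ k ∈ K, (d - e * (e * d + star z * S.toFun d)) * k = 0 := by
        intro k hk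
        obtain ⟨k', hk', h1, h2⟩ := hdomK d hd k hk
        have : (d - e * (e * d + star z * S.toFun d)) * k
            = d * k - e * ((e * d + star z * S.toFun d) * k) := by noncomm_ring
        rw [this, hck k hk, h1, h2, key1, sub_self]
      exact sub_eq_zero.mp (hKess _ hz0)
    · have hz0 : ∀ k ∈ K, (S.toFun d - z * (e * d + star z * S.toFun d)) * k = 0 := by
        intro k hk
        obtain ⟨k', hk', h1, h2⟩ := hdomK d hd k hk
        have : (S.toFun d - z * (e * d + star z * S.toFun d)) * k
            = S.toFun d * k - z * ((e * d + star z * S.toFun d) * k) := by noncomm_ring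
        rw [this, hck k hk, h1, h2, key2, sub_self]
      exact sub_eq_zero.mp (hKess _ hz0)
  -- Goal 1 : density of e·A in A
  have hdense : ∀ a ∈ A, a ∈ closure ((fun x => e * x) '' A) := by
    intro a ha
    have h1 : a ∈ closure S.dom := S.dense_dom a ha
    have h2 : S.dom ⊆ (fun x => e * x) '' A := by
      intro d hd
      obtain ⟨hdd, _⟩ := hstruct d hd
      refine ⟨e * d + star z * S.toFun d, ?_, hdd.symm⟩
      have hdA : d ∈ A := S.dom_sub hd
      exact add_mem (heA d hdA).1 (hzM _ (S.maps_to d hd)).2.2.1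
    exact closure_mono h2 h1
  -- spec of adjFun on the adjoint domain
  have hadjspec : ∀ b ∈ S.adjDom, S.adjFun b ∈ (A : Set M) ∧
      ∀ d ∈ S.dom, star b * S.toFun d = star (S.adjFun b) * d := by
    intro b hb
    obtain ⟨hbA, hex⟩ := hb
    rw [AmbientOp.adjFun, dif_pos hex]
    exact ⟨hex.choose_spec.1, hex.choose_spec.2⟩
  -- uniqueness of the adjoint witness
  have huniq : ∀ (b w₁ w₂ : M), (∀ d ∈ S.dom, star b * S.toFun d = star w₁ * d) →
      (∀ d ∈ S.dom, star b * S.toFun d = star w₂ * d) → w₁ = w₂ := by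
    intro b w₁ w₂ h1 h2
    have h3 : ∀ d ∈ S.dom, (star w₁ - star w₂) * d = 0 := by
      intro d hd
      rw [sub_mul, ← h1 d hd, ← h2 d hd, sub_self]
    have h4 : ∀ k ∈ K, (star w₁ - star w₂) * k = 0 := by
      intro k hk
      exact hext _ _ h3 k (S.dense_dom k (hKA hk))
    have h5 := hKess _ h4
    have h6 : star w₁ = star w₂ := sub_eq_zero.mp h5
    simpa using congrArg star h6
  -- key relation satisfied by every element of adjDom
  have hadj : ∀ b ∈ S.adjDom, e * S.adjFun b = star z * b := by
    intro b hb
    obtain ⟨hwA, hw⟩ := hadjspec b hb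
    have h1 : ∀ k ∈ K, (star b * z - star (S.adjFun b) * e) * k = 0 := by
      intro k hk
      have hek : e * k ∈ S.dom := by
        have : e * k ∈ (fun x => e * x) '' K := ⟨k, hk, rfl⟩
        rw [← hzdom] at this
        exact this.1
      have h2 := hw (e * k) hek
      rw [hzact k hk] at h2
      calc (star b * z - star (S.adjFun b) * e) * k
          = star b * (z * k) - star (S.adjFun b) * (e * k) := by noncomm_ring
        _ = 0 := by rw [h2, sub_self]
    have h3 : star b * z = star (S.adjFun b) * e := sub_eq_zero.mp (hKess _ h1)
    calc e * S.adjFun b = star (star (S.adjFun b) * e) := by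
          rw [star_mul, hesa.star_eq, star_star]
      _ = star (star b * z) := by rw [h3]
      _ = star z * b := by rw [star_mul, star_star]
  -- sufficient condition for membership of adjDom, with identified adjoint value
  have hadj_of : ∀ b w : M, b ∈ A → w ∈ A → e * w = star z * b →
      b ∈ S.adjDom ∧ S.adjFun b = w := by
    intro b w hbA hwA hbw
    have hbz : star b * z = star w * e := by
      calc star b * z = star (star z * b) := by rw [star_mul, star_star]
        _ = star (e * w) := by rw [hbw]
        _ = star w * e := by rw [star_mul, hesa.star_eq]
    have hP : ∀ d ∈ S.dom, star b * S.toFun d = star w * d := by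
      intro d hd
      obtain ⟨hd1, hd2⟩ := hstruct d hd
      calc star b * S.toFun d
          = star b * (z * (e * d + star z * S.toFun d)) := by rw [← hd2]
        _ = (star b * z) * (e * d + star z * S.toFun d) := by rw [mul_assoc]
        _ = (star w * e) * (e * d + star z * S.toFun d) := by rw [hbz]
        _ = star w * (e * (e * d + star z * S.toFun d)) := by rw [mul_assoc]
        _ = star w * d := by rw [← hd1]
    have hex : ∃ c ∈ (A : Set M), ∀ d ∈ S.dom, star b * S.toFun d = star c * d :=
      ⟨w, hwA, hP⟩
    have hmem : b ∈ S.adjDom := ⟨hbA, hex⟩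
    refine ⟨hmem, ?_⟩
    obtain ⟨_, hw2⟩ := hadjspec b hmem
    exact huniq b _ w hw2 hP
  -- forward inclusion and value of the double adjoint
  have hmem2 : ∀ a ∈ A, e * a ∈ S.adjDom2 ∧ S.adjFun2 (e * a) = z * a := by
    intro a ha
    have hcond : ∀ b ∈ S.adjDom, star (e * a) * S.adjFun b = star (z * a) * b := by
      intro b hb
      calc star (e * a) * S.adjFun b
          = star a * (e * S.adjFun b) := by rw [star_mul, hesa.star_eq, mul_assoc]
        _ = star a * (star z * b) := by rw [hadj b hb]
        _ = star (z * a) * b := by rw [star_mul, mul_assoc]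
    have hexx : ∃ c ∈ (A : Set M), ∀ b ∈ S.adjDom, star (e * a) * S.adjFun b = star c * b :=
      ⟨z * a, (hzM a ha).1, hcond⟩
    refine ⟨⟨(heA a ha).1, hexx⟩, ?_⟩
    rw [AmbientOp.adjFun2, dif_pos hexx]
    obtain ⟨hcA, hc⟩ := hexx.choose_spec
    -- uniqueness of the double adjoint witness via density of adjDom
    have h3 : ∀ b ∈ S.adjDom, (star hexx.choose - star (z * a)) * b = 0 := by
      intro b hb
      rw [sub_mul, ← hc b hb, ← hcond b hb, sub_self]
    have h4 : ∀ k ∈ K, (star hexx.choose - star (z * a)) * k = 0 := by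
      intro k hk
      exact hext _ _ h3 k (hS k (hKA hk))
    have h5 := hKess _ h4
    have h6 := sub_eq_zero.mp h5
    simpa using congrArg star h6
  -- reverse inclusion
  have hsub2 : S.adjDom2 ⊆ (fun x => e * x) '' A := by
    rintro a ⟨haA, c, hcA, hc⟩
    have hX : star z * (z * a) = e * (star z * c) := by
      refine sub_eq_zero.mp (hessL _ ?_)
      intro k hk
      have hkA : k ∈ A := hKA hk
      have hb : z * (e * k) ∈ A := (hzM _ ((heA k hkA).1)).1
      have hw : star z * (z * k) ∈ A := (hzM _ (hzM k hkA).1).2.2.1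
      have hbw : e * (star z * (z * k)) = star z * (z * (e * k)) := by
        calc e * (star z * (z * k)) = e * (star z * z) * k := by noncomm_ring
          _ = star z * z * e * k := by rw [hecomm]
          _ = star z * (z * (e * k)) := by noncomm_ring
      obtain ⟨hbdom, hbfun⟩ := hadj_of (z * (e * k)) (star z * (z * k)) hb hw hbw
      have h1 := hc _ hbdom
      rw [hbfun] at h1
      have h2 := congrArg star h1
      simp only [star_mul, star_star, hesa.star_eq] at h2
      calc star k * (star z * (z * a) - e * (star z * c))
          = star k * star z * z * a - star k * e * star z * c := by noncomm_ring
        _ = 0 := by rw [h2, sub_self]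
    refine ⟨e * a + star z * c, add_mem (heA a haA).1 (hzM c hcA).2.2.1, ?_⟩
    calc e * (e * a + star z * c) = (e * e) * a + e * (star z * c) := by noncomm_ring
      _ = (e * e) * a + star z * (z * a) := by rw [hX]
      _ = (e * e + star z * z) * a := by noncomm_ring
      _ = a := by rw [hsum, one_mul]
  refine ⟨hdense, ?_, fun a ha => (hmem2 a ha).2⟩
  apply Set.Subset.antisymm hsub2
  rintro _ ⟨a, ha, rfl⟩
  exact (hmem2 a ha).1
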